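/- More generally, for each n the function φ_n(W) = Σ_{i=1}^n λ_i(E[𝒲(W)²] − J) is convex in the weight vector W ∈ ℝ^E. -/

import Mathlib

open Matrix MeasureTheory

/-- The random consensus state matrix: for weights `Wt : ι → ℝ` on the edges of the
supergraph (edge `η` joins nodes `a η` and `b η`), and random link indicators
`L η ω ∈ {0,1}`, `𝒲_ij = Σ_{edges η = {i,j}} Wt η · L η ω` for `i ≠ j`, with
diagonal entries making all row sums equal to `1`. -/
noncomputable def stateMatrix {N : ℕ} {ι : Type*} [Fintype ι] {Ω : Type*}
    (a b : ι → Fin N) (L : ι → Ω → ℝ) (Wt : ι → ℝ) (ω : Ω) :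
    Matrix (Fin N) (Fin N) ℝ :=
  Matrix.of fun i j =>
    if i = j then 1 - ∑ η, (if a η = i ∨ b η = i then Wt η * L η ω else 0)
    else ∑ η, (if (a η = i ∧ b η = j) ∨ (a η = j ∧ b η = i) then Wt η * L η ω else 0)

noncomputable def sumNLargest {N : ℕ} (n : ℕ) (A : Matrix (Fin N) (Fin N) ℝ) : ℝ :=
  if h : A.IsHermitian then
    (((List.ofFn h.eigenvalues).insertionSort (· ≥ ·)).take n).sum
  else 0

/-! ### Auxiliary lemmas -/

section KyFan

lemma sumNLargest_rep {N : ℕ} (n : ℕ) (A : Matrix (Fin N) (Fin N) ℝ)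
    (hA : A.IsHermitian) :
    ∃ σ : Equiv.Perm (Fin N), Antitone (hA.eigenvalues ∘ σ) ∧
      sumNLargest n A
        = ∑ j ∈ Finset.univ.filter (fun j : Fin N => (j : ℕ) < n), hA.eigenvalues (σ j) := by
  classical
  set ev := hA.eigenvalues with hev
  set τ := Tuple.sort ev with hτ
  refine ⟨Fin.revPerm.trans τ, ?_, ?_⟩
  · intro i j hij
    have hm := Tuple.monotone_sort ev
    exact hm (Fin.rev_le_rev.mpr hij)
  · have hperm : (List.ofFn (ev ∘ (Fin.revPerm.trans τ))).Perm (List.ofFn ev) :=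
      Equiv.Perm.ofFn_comp_perm _ ev
    have hsorted : (List.ofFn (ev ∘ (Fin.revPerm.trans τ))).Pairwise (· ≥ ·) := by
      rw [List.pairwise_ofFn]
      intro i j hij
      exact Tuple.monotone_sort ev (Fin.rev_le_rev.mpr hij.le)
    have heq : (List.ofFn ev).insertionSort (· ≥ ·) = List.ofFn (ev ∘ (Fin.revPerm.trans τ)) := by
      refine List.Perm.eq_of_pairwise' ?_ hsorted (((List.perm_insertionSort _ _).trans hperm.symm))
      exact List.pairwise_insertionSort _ _
    rw [sumNLargest, dif_pos hA, heq, List.sum_take_ofFn]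
    rfl

lemma sum_mul_le_top {N n : ℕ} (hn1 : 1 ≤ n) (hnN : n ≤ N) (g d : Fin N → ℝ)
    (hg : Antitone g) (hd0 : ∀ j, 0 ≤ d j) (hd1 : ∀ j, d j ≤ 1)
    (hsum : ∑ j, d j = n) :
    ∑ j, g j * d j ≤ ∑ j ∈ Finset.univ.filter (fun j : Fin N => (j : ℕ) < n), g j := by
  classical
  have hn1N : n - 1 < N := by omega
  set c := g ⟨n - 1, hn1N⟩ with hc
  have hfilter : ∑ j ∈ Finset.univ.filter (fun j : Fin N => (j : ℕ) < n), g j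
      = ∑ j : Fin N, if (j : ℕ) < n then g j else 0 := by
    rw [Finset.sum_ite, Finset.sum_const_zero, add_zero]
  have hcard : (Finset.univ.filter (fun j : Fin N => (j : ℕ) < n)).card = n := by
    rcases eq_or_lt_of_le hnN with rfl | hlt
    · rw [Finset.filter_true_of_mem (fun j _ => j.isLt)]
      simp
    · have : Finset.univ.filter (fun j : Fin N => (j : ℕ) < n) = Finset.Iio ⟨n, hlt⟩ := by
        ext j; simp [Fin.lt_def]
      rw [this, Fin.card_Iio]
  have key : ∀ j : Fin N, g j * d j - (if (j : ℕ) < n then g j else 0)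
      ≤ c * (d j - (if (j : ℕ) < n then 1 else 0)) := by
    intro j
    by_cases hj : (j : ℕ) < n
    · simp only [hj, if_pos]
      have hgc : c ≤ g j := hg (by simp [Fin.le_def]; omega)
      have : g j * (d j - 1) ≤ c * (d j - 1) :=
        mul_le_mul_of_nonpos_right hgc (by linarith [hd1 j])
      linarith
    · simp only [hj, if_neg, not_false_iff]
      have hgc : g j ≤ c := hg (by simp [Fin.le_def, hc]; omega)
      have := mul_le_mul_of_nonneg_right hgc (hd0 j)
      linarith
  have hsum2 : ∑ j : Fin N, (if (j : ℕ) < n then (1:ℝ) else 0) = n := by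
    rw [Finset.sum_ite, Finset.sum_const_zero, add_zero, Finset.sum_const, nsmul_eq_mul, mul_one,
      hcard]
  have := Finset.sum_le_sum (fun j (_ : j ∈ Finset.univ) => key j)
  rw [Finset.sum_sub_distrib] at this
  have hrhs : ∑ j : Fin N, c * (d j - (if (j : ℕ) < n then 1 else 0)) = 0 := by
    rw [← Finset.mul_sum, Finset.sum_sub_distrib, hsum, hsum2, sub_self, mul_zero]
  rw [hrhs] at this; rw [hfilter]
  linarith

lemma quadform_spectral {N : ℕ} {B : Matrix (Fin N) (Fin N) ℝ} (hB : B.IsHermitian)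
    (v : Fin N → ℝ) :
    v ⬝ᵥ B *ᵥ v = ∑ j, hB.eigenvalues j *
      ((star (hB.eigenvectorUnitary : Matrix (Fin N) (Fin N) ℝ)) *ᵥ v) j ^ 2 := by
  set U := (hB.eigenvectorUnitary : Matrix (Fin N) (Fin N) ℝ) with hU
  set w := star U *ᵥ v with hw
  have hsp : B = U * diagonal hB.eigenvalues * star U := by
    have := hB.spectral_theorem
    simpa [RCLike.ofReal_real_eq_id] using this
  conv_lhs => rw [hsp]
  rw [← mulVec_mulVec, ← mulVec_mulVec, dotProduct_mulVec]
  have hvU : v ᵥ* U = w := by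
    rw [hw, star_eq_conjTranspose, conjTranspose_eq_transpose_of_trivial, ← vecMul_transpose,
      transpose_transpose]
  rw [hvU, dotProduct]
  refine Finset.sum_congr rfl fun j _ => ?_
  rw [mulVec_diagonal]
  ring

lemma kyFan_bound {N n : ℕ} (hn1 : 1 ≤ n) (hnN : n ≤ N)
    {B : Matrix (Fin N) (Fin N) ℝ} (hB : B.IsHermitian)
    (v : Fin n → Fin N → ℝ)
    (hv : ∀ i i', v i ⬝ᵥ v i' = if i = i' then 1 else 0) :
    ∑ i, v i ⬝ᵥ B *ᵥ v i ≤ sumNLargest n B := by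
  classical
  set U := (hB.eigenvectorUnitary : Matrix (Fin N) (Fin N) ℝ) with hUdef
  have hstar : star U = Uᵀ := by
    rw [star_eq_conjTranspose, conjTranspose_eq_transpose_of_trivial]
  have hUU : U * Uᵀ = 1 := by
    rw [← hstar]; exact (Matrix.mem_unitaryGroup_iff).mp hB.eigenvectorUnitary.2
  have hvmul : ∀ x : Fin N → ℝ, x ᵥ* U = Uᵀ *ᵥ x := by
    intro x
    conv_lhs => rw [← transpose_transpose U, vecMul_transpose]
  have hw : ∀ i i', (Uᵀ *ᵥ v i) ⬝ᵥ (Uᵀ *ᵥ v i') = if i = i' then 1 else 0 := by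
    intro i i'
    conv_lhs => rw [← hvmul (v i)]
    rw [← dotProduct_mulVec, mulVec_mulVec, hUU, one_mulVec]
    exact hv i i'
  set w : Fin n → Fin N → ℝ := fun i => Uᵀ *ᵥ v i with hwdef
  set d : Fin N → ℝ := fun j => ∑ i, w i j ^ 2 with hddef
  have hd0 : ∀ j, 0 ≤ d j := fun j => Finset.sum_nonneg fun i _ => sq_nonneg _
  set W : Matrix (Fin n) (Fin N) ℝ := Matrix.of (fun i j => w i j) with hWdef
  have hWWt : W * Wᵀ = 1 := by
    ext i i'
    rw [Matrix.mul_apply]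
    have := hw i i'
    rw [dotProduct] at this
    simpa [hWdef, Matrix.one_apply] using this
  set P : Matrix (Fin N) (Fin N) ℝ := Wᵀ * W with hPdef
  have hPP : P * P = P := by
    rw [hPdef, Matrix.mul_assoc, ← Matrix.mul_assoc W, hWWt, Matrix.one_mul]
  have hPsymm : ∀ j k, P k j = P j k := by
    intro j k
    simp [hPdef, Matrix.mul_apply, mul_comm]
  have hPd : ∀ j, P j j = d j := by
    intro j; simp [hPdef, Matrix.mul_apply, hddef, hWdef, sq]
  have h1 : ∀ j, d j = ∑ k, P j k ^ 2 := by
    intro j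
    have h := congrArg (fun M : Matrix (Fin N) (Fin N) ℝ => M j j) hPP
    simp only [Matrix.mul_apply] at h
    rw [← hPd, ← h]
    exact Finset.sum_congr rfl fun k _ => by rw [sq, hPsymm j k]
  have hd1 : ∀ j, d j ≤ 1 := by
    intro j
    have h2 : d j ^ 2 ≤ d j :=
      calc d j ^ 2 = P j j ^ 2 := by rw [hPd]
        _ ≤ ∑ k, P j k ^ 2 :=
            Finset.single_le_sum (fun k _ => sq_nonneg (P j k)) (Finset.mem_univ j)
        _ = d j := (h1 j).symm
    nlinarith [hd0 j]
  have hdsum : ∑ j, d j = n := by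
    rw [hddef]
    simp only []
    rw [Finset.sum_comm]
    have hone : ∀ i : Fin n, ∑ j, w i j ^ 2 = 1 := by
      intro i
      have := hw i i
      rw [dotProduct] at this
      simpa [hwdef, sq] using this
    simp [hone]
  obtain ⟨σ, hσanti, hσsum⟩ := sumNLargest_rep n B hB
  have key : ∑ i, v i ⬝ᵥ B *ᵥ v i = ∑ j, hB.eigenvalues j * d j := by
    rw [Finset.sum_congr rfl fun i (_ : i ∈ Finset.univ) => quadform_spectral hB (v i),
      Finset.sum_comm]
    refine Finset.sum_congr rfl fun j _ => ?_
    rw [hddef]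
    simp only [Finset.mul_sum]
    refine Finset.sum_congr rfl fun i _ => ?_
    rw [hwdef]
    simp only [← hUdef, hstar]
  rw [key, hσsum]
  have hmain := sum_mul_le_top hn1 hnN (hB.eigenvalues ∘ σ) (d ∘ σ) hσanti
    (fun j => hd0 _) (fun j => hd1 _)
    (by rw [← hdsum]; exact Equiv.sum_comp σ d)
  calc ∑ j, hB.eigenvalues j * d j
      = ∑ j, (hB.eigenvalues ∘ σ) j * (d ∘ σ) j :=
        (Equiv.sum_comp σ (fun j => hB.eigenvalues j * d j)).symm
    _ ≤ _ := hmain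

lemma kyFan_achieve {N n : ℕ} (hnN : n ≤ N) {A : Matrix (Fin N) (Fin N) ℝ}
    (hA : A.IsHermitian) :
    ∃ v : Fin n → Fin N → ℝ, (∀ i i', v i ⬝ᵥ v i' = if i = i' then 1 else 0) ∧
      ∑ i, v i ⬝ᵥ A *ᵥ v i = sumNLargest n A := by
  classical
  obtain ⟨σ, hσanti, hσsum⟩ := sumNLargest_rep n A hA
  set U := (hA.eigenvectorUnitary : Matrix (Fin N) (Fin N) ℝ) with hUdef
  have hstar : star U = Uᵀ := by
    rw [star_eq_conjTranspose, conjTranspose_eq_transpose_of_trivial]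
  have hUtU : Uᵀ * U = 1 := by
    rw [← hstar]; exact (Matrix.mem_unitaryGroup_iff').mp hA.eigenvectorUnitary.2
  set c : Fin n → Fin N := fun i => σ (Fin.castLE hnN i) with hcdef
  have hcinj : Function.Injective c := fun i i' h => by
    have := σ.injective h
    exact Fin.castLE_injective hnN this
  refine ⟨fun i k => U k (c i), ?_, ?_⟩
  · intro i i'
    have h := congrArg (fun M : Matrix (Fin N) (Fin N) ℝ => M (c i) (c i')) hUtU
    simp only [Matrix.mul_apply, Matrix.one_apply, Matrix.transpose_apply] at h
    rw [dotProduct]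
    rw [h]
    by_cases hii : i = i'
    · simp [hii]
    · rw [if_neg (fun hc => hii (hcinj hc)), if_neg hii]
  · have hcol : ∀ i : Fin n, (Uᵀ *ᵥ fun k => U k (c i)) = fun j => if j = c i then 1 else 0 := by
      intro i
      funext j
      have h := congrArg (fun M : Matrix (Fin N) (Fin N) ℝ => M j (c i)) hUtU
      simp only [Matrix.mul_apply, Matrix.one_apply, Matrix.transpose_apply] at h
      rw [mulVec]
      simpa [dotProduct] using h
    have hquad : ∀ i : Fin n, (fun k => U k (c i)) ⬝ᵥ A *ᵥ (fun k => U k (c i))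
        = hA.eigenvalues (c i) := by
      intro i
      rw [quadform_spectral hA, Finset.sum_congr rfl fun j (_ : j ∈ Finset.univ) => by
        rw [hstar, hcol i]]
      simp [apply_ite (fun x : ℝ => x ^ 2)]
    rw [Finset.sum_congr rfl fun i (_ : i ∈ Finset.univ) => hquad i, hσsum]
    have hset : Finset.univ.filter (fun j : Fin N => (j : ℕ) < n)
        = Finset.map (Fin.castLEEmb hnN) Finset.univ := by
      ext j
      simp only [Finset.mem_filter, Finset.mem_univ, true_and, Finset.mem_map]
      constructor
      · intro hj; exact ⟨⟨(j : ℕ), hj⟩, by ext; rfl⟩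
      · rintro ⟨i, rfl⟩; simp
    rw [hset, Finset.sum_map]
    rfl

end KyFan

section StateMatrix

variable {N : ℕ} {ι : Type*} [Fintype ι] {Ω : Type*} [MeasurableSpace Ω]
  {μ : MeasureTheory.Measure Ω} [IsProbabilityMeasure μ]
  {a b : ι → Fin N} {L : ι → Ω → ℝ}

omit [MeasurableSpace Ω] in
lemma stateMatrix_symm (Wt : ι → ℝ) (ω : Ω) :
    (stateMatrix a b L Wt ω)ᵀ = stateMatrix a b L Wt ω := by
  ext i j
  simp only [transpose_apply, stateMatrix, of_apply]
  rcases eq_or_ne i j with rfl | h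
  · rfl
  · rw [if_neg (Ne.symm h), if_neg h]
    refine Finset.sum_congr rfl fun η _ => ?_
    exact if_congr or_comm rfl rfl

omit [MeasurableSpace Ω] in
lemma stateMatrix_entry_symm (Wt : ι → ℝ) (ω : Ω) (x y : Fin N) :
    stateMatrix a b L Wt ω x y = stateMatrix a b L Wt ω y x := by
  have h := stateMatrix_symm (a := a) (b := b) (L := L) Wt ω
  exact (congrFun (congrFun h y) x)

omit [MeasurableSpace Ω] in
lemma stateMatrix_affine (p q : ℝ) (hpq : p + q = 1) (W₁ W₂ : ι → ℝ) (ω : Ω) :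
    stateMatrix a b L (p • W₁ + q • W₂) ω
      = p • stateMatrix a b L W₁ ω + q • stateMatrix a b L W₂ ω := by
  ext i j
  have key : ∀ P : ι → Prop, ∀ _ : DecidablePred P,
      ∑ η, (if P η then (p • W₁ + q • W₂) η * L η ω else 0)
        = p * (∑ η, if P η then W₁ η * L η ω else 0)
          + q * (∑ η, if P η then W₂ η * L η ω else 0) := by
    intro P hP
    rw [Finset.mul_sum, Finset.mul_sum, ← Finset.sum_add_distrib]
    refine Finset.sum_congr rfl fun η _ => ?_
    by_cases hc : P η
    · simp only [hc, if_pos, Pi.add_apply, Pi.smul_apply, smul_eq_mul]; ring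
    · simp [hc]
  simp only [stateMatrix, of_apply, Matrix.add_apply, Matrix.smul_apply, smul_eq_mul]
  rcases eq_or_ne i j with rfl | h
  · rw [if_pos rfl, if_pos rfl, if_pos rfl, key]
    ring_nf
    nlinarith [hpq]
  · rw [if_neg h, if_neg h, if_neg h, key]

lemma stateMatrix_measurable (hLmeas : ∀ η, Measurable (L η)) (Wt : ι → ℝ) (i j : Fin N) :
    Measurable (fun ω => stateMatrix a b L Wt ω i j) := by
  simp only [stateMatrix, of_apply]
  split_ifs
  · exact measurable_const.sub (Finset.measurable_sum _ fun η _ => by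
      split_ifs
      · exact (hLmeas η).const_mul _
      · exact measurable_const)
  · exact Finset.measurable_sum _ fun η _ => by
      split_ifs
      · exact (hLmeas η).const_mul _
      · exact measurable_const

omit [MeasurableSpace Ω] in
lemma stateMatrix_bound (hL01 : ∀ η ω, L η ω = 0 ∨ L η ω = 1) (Wt : ι → ℝ)
    (i j : Fin N) (ω : Ω) :
    |stateMatrix a b L Wt ω i j| ≤ 1 + ∑ η, |Wt η| := by
  have hL : ∀ η, |L η ω| ≤ 1 := fun η => by rcases hL01 η ω with h | h <;> simp [h]
  have hterm : ∀ (P : Prop) (_ : Decidable P) (η : ι),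
      |if P then Wt η * L η ω else 0| ≤ |Wt η| := by
    intro P hP η
    split_ifs
    · rw [abs_mul]
      calc |Wt η| * |L η ω| ≤ |Wt η| * 1 :=
        mul_le_mul_of_nonneg_left (hL η) (abs_nonneg _)
      _ = |Wt η| := mul_one _
    · simp
  have hsum : ∀ (P : ι → Prop) (_ : DecidablePred P),
      |∑ η, (if P η then Wt η * L η ω else 0)| ≤ ∑ η, |Wt η| := by
    intro P hP
    calc |∑ η, (if P η then Wt η * L η ω else 0)|
        ≤ ∑ η, |if P η then Wt η * L η ω else 0| := Finset.abs_sum_le_sum_abs _ _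
      _ ≤ ∑ η, |Wt η| := Finset.sum_le_sum fun η _ => hterm _ _ η
  simp only [stateMatrix, of_apply]
  split_ifs
  · calc |1 - ∑ η, (if a η = i ∨ b η = i then Wt η * L η ω else 0)|
        ≤ |(1:ℝ)| + |∑ η, (if a η = i ∨ b η = i then Wt η * L η ω else 0)| := abs_sub _ _
    _ ≤ 1 + ∑ η, |Wt η| := by
        rw [abs_one]
        exact add_le_add_right (hsum _ _) 1
  · calc |∑ η, (if (a η = i ∧ b η = j) ∨ (a η = j ∧ b η = i) then Wt η * L η ω else 0)|
        ≤ ∑ η, |Wt η| := hsum _ _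
    _ ≤ 1 + ∑ η, |Wt η| := by linarith

lemma stateMatrix_sq_integrable (hLmeas : ∀ η, Measurable (L η))
    (hL01 : ∀ η ω, L η ω = 0 ∨ L η ω = 1) (Wt : ι → ℝ) (i j : Fin N) :
    Integrable (fun ω => (stateMatrix a b L Wt ω * stateMatrix a b L Wt ω) i j) μ := by
  have heq : (fun ω => (stateMatrix a b L Wt ω * stateMatrix a b L Wt ω) i j)
      = fun ω => ∑ k, stateMatrix a b L Wt ω i k * stateMatrix a b L Wt ω k j := by
    funext ω; rw [Matrix.mul_apply]
  rw [heq]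
  refine integrable_finset_sum _ fun k _ => ?_
  set C := 1 + ∑ η, |Wt η| with hC
  refine ⟨((stateMatrix_measurable hLmeas Wt i k).mul
    (stateMatrix_measurable hLmeas Wt k j)).aestronglyMeasurable,
    HasFiniteIntegral.of_bounded (C := C * C) (ae_of_all _ fun ω => ?_)⟩
  have h1 := stateMatrix_bound (a := a) (b := b) hL01 Wt i k ω
  have h2 := stateMatrix_bound (a := a) (b := b) hL01 Wt k j ω
  have hC0 : (0:ℝ) ≤ C := by
    rw [hC]
    have : (0:ℝ) ≤ ∑ η, |Wt η| := Finset.sum_nonneg fun η _ => abs_nonneg _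
    linarith
  rw [Real.norm_eq_abs, abs_mul]
  exact mul_le_mul h1 h2 (abs_nonneg _) hC0

omit [MeasurableSpace Ω] in
lemma stateMatrix_quad_eq (Wt : ι → ℝ) (ω : Ω) (v : Fin N → ℝ) :
    (stateMatrix a b L Wt ω *ᵥ v) ⬝ᵥ (stateMatrix a b L Wt ω *ᵥ v)
      = ∑ i, ∑ j, v i * v j * (stateMatrix a b L Wt ω * stateMatrix a b L Wt ω) i j := by
  set M := stateMatrix a b L Wt ω with hM
  have hsym : Mᵀ = M := stateMatrix_symm Wt ω
  have h1 : v ᵥ* M = M *ᵥ v := by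
    conv_lhs => rw [← hsym, vecMul_transpose]
  calc (M *ᵥ v) ⬝ᵥ (M *ᵥ v)
      = (v ᵥ* M) ⬝ᵥ (M *ᵥ v) := by rw [h1]
    _ = v ⬝ᵥ (M * M) *ᵥ v := by rw [← dotProduct_mulVec, mulVec_mulVec]
    _ = ∑ i, ∑ j, v i * v j * (M * M) i j := by
        simp only [mulVec, dotProduct, Finset.mul_sum]
        exact Finset.sum_congr rfl fun i _ => Finset.sum_congr rfl fun j _ => by ring

end StateMatrix

lemma dot_convex {N : ℕ} (x y : Fin N → ℝ) (p q : ℝ) (hp : 0 ≤ p) (hq : 0 ≤ q)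
    (hpq : p + q = 1) :
    (p • x + q • y) ⬝ᵥ (p • x + q • y) ≤ p * (x ⬝ᵥ x) + q * (y ⬝ᵥ y) := by
  have hxy : 0 ≤ (x - y) ⬝ᵥ (x - y) := Finset.sum_nonneg fun i _ => mul_self_nonneg _
  have h1 : (x - y) ⬝ᵥ (x - y) = x ⬝ᵥ x - 2 * (x ⬝ᵥ y) + y ⬝ᵥ y := by
    rw [sub_dotProduct, dotProduct_sub, dotProduct_sub, dotProduct_comm y x]
    ring
  have h2 : (p • x + q • y) ⬝ᵥ (p • x + q • y)
      = p^2 * (x ⬝ᵥ x) + 2*p*q*(x ⬝ᵥ y) + q^2 * (y ⬝ᵥ y) := by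
    simp only [add_dotProduct, dotProduct_add, smul_dotProduct, dotProduct_smul, smul_eq_mul,
      dotProduct_comm y x]
    ring
  have hq' : q = 1 - p := by linarith
  subst hq'
  have hkey : p * (x ⬝ᵥ x) + (1-p) * (y ⬝ᵥ y) - (p • x + (1-p) • y) ⬝ᵥ (p • x + (1-p) • y)
      = p * (1-p) * ((x - y) ⬝ᵥ (x - y)) := by
    rw [h1, h2]; ring
  have hp1 : 0 ≤ 1 - p := by linarith
  nlinarith [mul_nonneg (mul_nonneg hp hp1) hxy, hkey]

/-- For each `n`, the map `φ_n : W ↦ Σ_{i=1}^n λ_i(E[𝒲(W)²] - J)` is convex in the weight vector. -/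
theorem phi_n_convex (N : ℕ) (hN : 0 < N) (n : ℕ) (hn1 : 1 ≤ n) (hnN : n ≤ N) {ι : Type*} [Fintype ι]
    {Ω : Type*} [MeasurableSpace Ω] (μ : MeasureTheory.Measure Ω)
    [IsProbabilityMeasure μ]
    (a b : ι → Fin N) (hab : ∀ η, a η ≠ b η)
    (L : ι → Ω → ℝ) (hLmeas : ∀ η, Measurable (L η))
    (hL01 : ∀ η ω, L η ω = 0 ∨ L η ω = 1)
    (J : Matrix (Fin N) (Fin N) ℝ) (hJ : J = Matrix.of fun _ _ => (1 : ℝ) / N) :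
    ConvexOn ℝ Set.univ (fun Wt : ι → ℝ =>
      sumNLargest n ((Matrix.of fun i j =>
        ∫ ω, (stateMatrix a b L Wt ω * stateMatrix a b L Wt ω) i j ∂μ) - J)) := by
  classical
  set M : (ι → ℝ) → Ω → Matrix (Fin N) (Fin N) ℝ := fun Wt ω => stateMatrix a b L Wt ω with hMdef
  set A : (ι → ℝ) → Matrix (Fin N) (Fin N) ℝ := fun Wt =>
    (Matrix.of fun i j => ∫ ω, (M Wt ω * M Wt ω) i j ∂μ) - J with hAdef
  -- Hermitian
  have hherm : ∀ Wt, (A Wt).IsHermitian := by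
    intro Wt
    rw [Matrix.IsHermitian, conjTranspose_eq_transpose_of_trivial]
    ext i j
    simp only [transpose_apply, Matrix.sub_apply, of_apply, hAdef, hJ]
    have hentry : ∀ ω, (M Wt ω * M Wt ω) j i = (M Wt ω * M Wt ω) i j := by
      intro ω
      simp only [hMdef]
      rw [Matrix.mul_apply, Matrix.mul_apply]
      refine Finset.sum_congr rfl fun k _ => ?_
      rw [stateMatrix_entry_symm Wt ω j k, stateMatrix_entry_symm Wt ω k i, mul_comm]
    rw [integral_congr_ae (ae_of_all _ hentry)]
  -- integrability of entries
  have hInt : ∀ Wt (i j : Fin N), Integrable (fun ω => (M Wt ω * M Wt ω) i j) μ :=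
    fun Wt i j => stateMatrix_sq_integrable hLmeas hL01 Wt i j
  -- integrability of quadratic forms
  have hQint : ∀ Wt (v : Fin N → ℝ),
      Integrable (fun ω => (M Wt ω *ᵥ v) ⬝ᵥ (M Wt ω *ᵥ v)) μ := by
    intro Wt v
    have heq : (fun ω => (M Wt ω *ᵥ v) ⬝ᵥ (M Wt ω *ᵥ v))
        = fun ω => ∑ i, ∑ j, v i * v j * (M Wt ω * M Wt ω) i j :=
      funext fun ω => stateMatrix_quad_eq Wt ω v
    rw [heq]
    exact integrable_finset_sum _ fun i _ => integrable_finset_sum _ fun j _ =>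
      (hInt Wt i j).const_mul _
  -- quadratic form exchange with the integral
  have hqe : ∀ Wt (v : Fin N → ℝ), v ⬝ᵥ (A Wt) *ᵥ v
      = (∫ ω, (M Wt ω *ᵥ v) ⬝ᵥ (M Wt ω *ᵥ v) ∂μ) - v ⬝ᵥ J *ᵥ v := by
    intro Wt v
    rw [hAdef]
    simp only [sub_mulVec, dotProduct_sub]
    congr 1
    have h1 : v ⬝ᵥ (Matrix.of fun i j => ∫ ω, (M Wt ω * M Wt ω) i j ∂μ) *ᵥ v
        = ∑ i, ∑ j, v i * v j * ∫ ω, (M Wt ω * M Wt ω) i j ∂μ := by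
      simp only [mulVec, dotProduct, of_apply, Finset.mul_sum]
      exact Finset.sum_congr rfl fun i _ => Finset.sum_congr rfl fun j _ => by ring
    rw [h1]
    have h2 : ∀ i j : Fin N, v i * v j * ∫ ω, (M Wt ω * M Wt ω) i j ∂μ
        = ∫ ω, v i * v j * (M Wt ω * M Wt ω) i j ∂μ :=
      fun i j => (integral_const_mul _ _).symm
    rw [Finset.sum_congr rfl fun i (_ : i ∈ Finset.univ) =>
      Finset.sum_congr rfl fun j (_ : j ∈ Finset.univ) => h2 i j]
    rw [Finset.sum_congr rfl fun i (_ : i ∈ Finset.univ) =>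
      (integral_finset_sum _ fun j _ => (hInt Wt i j).const_mul _).symm]
    rw [← integral_finset_sum _ fun i _ => integrable_finset_sum _ fun j _ =>
      (hInt Wt i j).const_mul _]
    exact integral_congr_ae (ae_of_all _ fun ω => (stateMatrix_quad_eq Wt ω v).symm)
  refine ⟨convex_univ, ?_⟩
  intro W₁ _ W₂ _ p q hp hq hpq
  simp only [smul_eq_mul]
  obtain ⟨v, hv, hveq⟩ := kyFan_achieve hnN (hherm (p • W₁ + q • W₂))
  have hbound1 := kyFan_bound hn1 hnN (hherm W₁) v hv
  have hbound2 := kyFan_bound hn1 hnN (hherm W₂) v hv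
  -- per-vector convexity
  have hmid : ∀ i : Fin n, v i ⬝ᵥ (A (p • W₁ + q • W₂)) *ᵥ v i
      ≤ p * (v i ⬝ᵥ (A W₁) *ᵥ v i) + q * (v i ⬝ᵥ (A W₂) *ᵥ v i) := by
    intro i
    rw [hqe, hqe, hqe]
    have hptwise : ∀ ω, (M (p • W₁ + q • W₂) ω *ᵥ v i) ⬝ᵥ (M (p • W₁ + q • W₂) ω *ᵥ v i)
        ≤ p * ((M W₁ ω *ᵥ v i) ⬝ᵥ (M W₁ ω *ᵥ v i))
          + q * ((M W₂ ω *ᵥ v i) ⬝ᵥ (M W₂ ω *ᵥ v i)) := by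
      intro ω
      rw [hMdef]
      simp only []
      rw [stateMatrix_affine p q hpq W₁ W₂ ω, add_mulVec, smul_mulVec, smul_mulVec]
      exact dot_convex _ _ p q hp hq hpq
    have hintle : (∫ ω, (M (p • W₁ + q • W₂) ω *ᵥ v i) ⬝ᵥ (M (p • W₁ + q • W₂) ω *ᵥ v i) ∂μ)
        ≤ p * (∫ ω, (M W₁ ω *ᵥ v i) ⬝ᵥ (M W₁ ω *ᵥ v i) ∂μ)
          + q * (∫ ω, (M W₂ ω *ᵥ v i) ⬝ᵥ (M W₂ ω *ᵥ v i) ∂μ) := by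
      calc (∫ ω, (M (p • W₁ + q • W₂) ω *ᵥ v i) ⬝ᵥ (M (p • W₁ + q • W₂) ω *ᵥ v i) ∂μ)
          ≤ ∫ ω, p * ((M W₁ ω *ᵥ v i) ⬝ᵥ (M W₁ ω *ᵥ v i))
              + q * ((M W₂ ω *ᵥ v i) ⬝ᵥ (M W₂ ω *ᵥ v i)) ∂μ :=
            integral_mono (hQint _ _) (((hQint W₁ (v i)).const_mul p).add
              ((hQint W₂ (v i)).const_mul q)) hptwise
        _ = p * (∫ ω, (M W₁ ω *ᵥ v i) ⬝ᵥ (M W₁ ω *ᵥ v i) ∂μ)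
              + q * (∫ ω, (M W₂ ω *ᵥ v i) ⬝ᵥ (M W₂ ω *ᵥ v i) ∂μ) := by
            rw [integral_add ((hQint W₁ (v i)).const_mul p) ((hQint W₂ (v i)).const_mul q),
              integral_const_mul, integral_const_mul]
    set c := v i ⬝ᵥ J *ᵥ v i with hcdef
    have hexp : p * ((∫ ω, (M W₁ ω *ᵥ v i) ⬝ᵥ (M W₁ ω *ᵥ v i) ∂μ) - c)
        + q * ((∫ ω, (M W₂ ω *ᵥ v i) ⬝ᵥ (M W₂ ω *ᵥ v i) ∂μ) - c)
        = p * (∫ ω, (M W₁ ω *ᵥ v i) ⬝ᵥ (M W₁ ω *ᵥ v i) ∂μ)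
          + q * (∫ ω, (M W₂ ω *ᵥ v i) ⬝ᵥ (M W₂ ω *ᵥ v i) ∂μ) - c := by
      linear_combination (-c) * hpq
    rw [hexp]
    linarith
  calc sumNLargest n (A (p • W₁ + q • W₂))
      = ∑ i, v i ⬝ᵥ (A (p • W₁ + q • W₂)) *ᵥ v i := hveq.symm
    _ ≤ ∑ i, (p * (v i ⬝ᵥ (A W₁) *ᵥ v i) + q * (v i ⬝ᵥ (A W₂) *ᵥ v i)) :=
        Finset.sum_le_sum fun i _ => hmid i
    _ = p * ∑ i, v i ⬝ᵥ (A W₁) *ᵥ v i + q * ∑ i, v i ⬝ᵥ (A W₂) *ᵥ v i := by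
        rw [Finset.sum_add_distrib, ← Finset.mul_sum, ← Finset.mul_sum]
    _ ≤ p * sumNLargest n (A W₁) + q * sumNLargest n (A W₂) :=
        add_le_add (mul_le_mul_of_nonneg_left hbound1 hp)
          (mul_le_mul_of_nonneg_left hbound2 hq)
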